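/- Let n ≥ 2 be an integer and let ω ∈ ℝ with ω ≠ −1. For x ∈ ℝⁿ∖{0} and i,j ∈ {1,…,n}, let Γ_{n,ω,i}^j(x) ≡ ((ω+2)/(2(ω+1)))·δ_{ij}·S_n(x) − (ω/(2(ω+1)))·(1/s_n)·x_i x_j/|x|ⁿ, and let Γ_{n,ω}^j ≡ (Γ_{n,ω,i}^j)_{i=1,…,n} denote the j-th column, a map from ℝⁿ∖{0} to ℝⁿ. Then for every j ∈ {1,…,n} one has L[ω]Γ_{n,ω}^j(x) ≡ ΔΓ_{n,ω}^j(x) + ω∇(div Γ_{n,ω}^j)(x) = 0 for all x ∈ ℝⁿ∖{0}; that is, each column of the Kelvin-type matrix Γ_{n,ω} solves the homogeneous Lamé equations away from the origin. -/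

import Mathlib

open MeasureTheory

/-- Partial derivative `∂f/∂x_i` of a scalar field on `ℝⁿ` (Euclidean). -/
noncomputable def pd {n : ℕ} (f : EuclideanSpace ℝ (Fin n) → ℝ) (i : Fin n)
    (x : EuclideanSpace ℝ (Fin n)) : ℝ :=
  fderiv ℝ f x (EuclideanSpace.single i 1)

/-- `s_n`, the `(n-1)`-dimensional measure of the unit sphere in `ℝⁿ`,
which equals `n` times the volume of the unit ball. -/
noncomputable def sphereMeas (n : ℕ) : ℝ :=
  (n : ℝ) * (volume (Metric.ball (0 : EuclideanSpace ℝ (Fin n)) 1)).toReal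

/-- `S_n`, the fundamental solution of the Laplacian in `ℝⁿ`. -/
noncomputable def fundSol (n : ℕ) (x : EuclideanSpace ℝ (Fin n)) : ℝ :=
  if n = 2 then (1 / sphereMeas n) * Real.log ‖x‖
  else (1 / ((2 - (n : ℝ)) * sphereMeas n)) * ‖x‖ ^ ((2 : ℝ) - n)

/-- The `(i,j)` entry `Γ_{n,ω,i}^j` of the Kelvin-type fundamental solution of the
Lamé operator. -/
noncomputable def kelvin (n : ℕ) (ω : ℝ) (i j : Fin n)
    (x : EuclideanSpace ℝ (Fin n)) : ℝ :=
  ((ω + 2) / (2 * (ω + 1))) * (if i = j then 1 else 0) * fundSol n x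
    - (ω / (2 * (ω + 1))) * (1 / sphereMeas n) * (x i * x j / ‖x‖ ^ n)

namespace LameAux
variable {n : ℕ}

/-- The squared norm as an explicit sum of squares of coordinates. -/
noncomputable def QQ (y : EuclideanSpace ℝ (Fin n)) : ℝ := ∑ l, y l ^ 2

lemma QQ_eq (y : EuclideanSpace ℝ (Fin n)) : QQ y = ‖y‖ ^ 2 := by
  rw [EuclideanSpace.norm_eq, Real.sq_sqrt (by positivity)]
  simp [QQ, sq_abs]

lemma QQ_pos {y : EuclideanSpace ℝ (Fin n)} (hy : y ≠ 0) : 0 < QQ y := by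
  rw [QQ_eq]; exact pow_pos (norm_pos_iff.mpr hy) 2

lemma hasFDerivAt_QQ (x : EuclideanSpace ℝ (Fin n)) :
    HasFDerivAt QQ (∑ l, (2 * x l) • (EuclideanSpace.proj l : EuclideanSpace ℝ (Fin n) →L[ℝ] ℝ)) x := by
  have : ∀ l : Fin n, HasFDerivAt (fun y : EuclideanSpace ℝ (Fin n) => y l ^ 2)
      ((2 * x l) • (EuclideanSpace.proj l : EuclideanSpace ℝ (Fin n) →L[ℝ] ℝ)) x := by
    intro l
    have h := ((EuclideanSpace.proj l : EuclideanSpace ℝ (Fin n) →L[ℝ] ℝ).hasFDerivAt (x := x)).fun_mul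
      ((EuclideanSpace.proj l : EuclideanSpace ℝ (Fin n) →L[ℝ] ℝ).hasFDerivAt (x := x))
    have e : (fun y : EuclideanSpace ℝ (Fin n) => y l ^ 2)
        = fun y => (EuclideanSpace.proj l y) * (EuclideanSpace.proj l y) := by
      funext y; simp [sq]
    rw [e]
    refine h.congr_fderiv ?_
    ext v
    simp [two_mul, add_mul]
  exact HasFDerivAt.fun_sum (fun l _ => this l)

lemma diff_QQ (x : EuclideanSpace ℝ (Fin n)) : DifferentiableAt ℝ QQ x :=
  (hasFDerivAt_QQ x).differentiableAt

lemma pd_QQ (x : EuclideanSpace ℝ (Fin n)) (i : Fin n) : pd QQ i x = 2 * x i := by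
  rw [pd, (hasFDerivAt_QQ x).fderiv]
  simp [EuclideanSpace.single_apply]

lemma diff_coord (x : EuclideanSpace ℝ (Fin n)) (i : Fin n) :
    DifferentiableAt ℝ (fun y : EuclideanSpace ℝ (Fin n) => y i) x :=
  (EuclideanSpace.proj i : EuclideanSpace ℝ (Fin n) →L[ℝ] ℝ).differentiableAt

lemma pd_coord (x : EuclideanSpace ℝ (Fin n)) (i l : Fin n) :
    pd (fun y => y i) l x = if i = l then 1 else 0 := by
  have : (fun y : EuclideanSpace ℝ (Fin n) => y i) = (EuclideanSpace.proj i : EuclideanSpace ℝ (Fin n) →L[ℝ] ℝ) := rfl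
  rw [pd, this, ContinuousLinearMap.fderiv]
  simp [EuclideanSpace.single_apply, eq_comm]

lemma hasFDerivAt_QQ_rpow {x : EuclideanSpace ℝ (Fin n)} (hx : x ≠ 0) (a : ℝ) :
    HasFDerivAt (fun y => QQ y ^ a)
      ((a * QQ x ^ (a - 1)) • (∑ l, (2 * x l) • (EuclideanSpace.proj l : EuclideanSpace ℝ (Fin n) →L[ℝ] ℝ))) x :=
  (Real.hasDerivAt_rpow_const (Or.inl (QQ_pos hx).ne')).comp_hasFDerivAt x (hasFDerivAt_QQ x)

lemma diff_QQ_rpow {x : EuclideanSpace ℝ (Fin n)} (hx : x ≠ 0) (a : ℝ) :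
    DifferentiableAt ℝ (fun y => QQ y ^ a) x :=
  (hasFDerivAt_QQ_rpow hx a).differentiableAt

lemma pd_QQ_rpow {x : EuclideanSpace ℝ (Fin n)} (hx : x ≠ 0) (a : ℝ) (i : Fin n) :
    pd (fun y => QQ y ^ a) i x = a * QQ x ^ (a - 1) * (2 * x i) := by
  rw [pd, (hasFDerivAt_QQ_rpow hx a).fderiv]
  simp [EuclideanSpace.single_apply, mul_assoc]

lemma hasFDerivAt_log_QQ {x : EuclideanSpace ℝ (Fin n)} (hx : x ≠ 0) :
    HasFDerivAt (fun y => Real.log (QQ y))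
      ((QQ x)⁻¹ • (∑ l, (2 * x l) • (EuclideanSpace.proj l : EuclideanSpace ℝ (Fin n) →L[ℝ] ℝ))) x :=
  (Real.hasDerivAt_log (QQ_pos hx).ne').comp_hasFDerivAt x (hasFDerivAt_QQ x)

lemma diff_log_QQ {x : EuclideanSpace ℝ (Fin n)} (hx : x ≠ 0) :
    DifferentiableAt ℝ (fun y => Real.log (QQ y)) x :=
  (hasFDerivAt_log_QQ hx).differentiableAt

lemma pd_log_QQ {x : EuclideanSpace ℝ (Fin n)} (hx : x ≠ 0) (i : Fin n) :
    pd (fun y => Real.log (QQ y)) i x = (QQ x)⁻¹ * (2 * x i) := by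
  rw [pd, (hasFDerivAt_log_QQ hx).fderiv]
  simp [EuclideanSpace.single_apply, mul_assoc]

lemma pd_mul {f g : EuclideanSpace ℝ (Fin n) → ℝ} {x : EuclideanSpace ℝ (Fin n)}
    (hf : DifferentiableAt ℝ f x) (hg : DifferentiableAt ℝ g x) (i : Fin n) :
    pd (fun y => f y * g y) i x = pd f i x * g x + f x * pd g i x := by
  rw [pd, fderiv_fun_mul hf hg]
  simp [pd]; ring

lemma pd_const_mul {f : EuclideanSpace ℝ (Fin n) → ℝ} {x : EuclideanSpace ℝ (Fin n)}
    (hf : DifferentiableAt ℝ f x) (c : ℝ) (i : Fin n) :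
    pd (fun y => c * f y) i x = c * pd f i x := by
  rw [pd, fderiv_const_mul hf]
  simp [pd]

lemma pd_add {f g : EuclideanSpace ℝ (Fin n) → ℝ} {x : EuclideanSpace ℝ (Fin n)}
    (hf : DifferentiableAt ℝ f x) (hg : DifferentiableAt ℝ g x) (i : Fin n) :
    pd (fun y => f y + g y) i x = pd f i x + pd g i x := by
  rw [pd, fderiv_fun_add hf hg]; simp [pd]

lemma pd_sub {f g : EuclideanSpace ℝ (Fin n) → ℝ} {x : EuclideanSpace ℝ (Fin n)}
    (hf : DifferentiableAt ℝ f x) (hg : DifferentiableAt ℝ g x) (i : Fin n) :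
    pd (fun y => f y - g y) i x = pd f i x - pd g i x := by
  rw [pd, fderiv_fun_sub hf hg]; simp [pd]

lemma pd_congr {f g : EuclideanSpace ℝ (Fin n) → ℝ} {x : EuclideanSpace ℝ (Fin n)}
    (h : f =ᶠ[nhds x] g) (i : Fin n) : pd f i x = pd g i x := by
  rw [pd, h.fderiv_eq]; rfl

/-! ### Reformulation of `fundSol` and `kelvin` via `QQ` -/

lemma norm_rpow_eq {y : EuclideanSpace ℝ (Fin n)} (a : ℝ) :
    ‖y‖ ^ a = QQ y ^ (a / 2) := by
  rw [QQ_eq, ← Real.rpow_natCast ‖y‖ 2, ← Real.rpow_mul (norm_nonneg y)]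
  norm_num
  congr 1
  ring

lemma norm_pow_eq {y : EuclideanSpace ℝ (Fin n)} :
    (‖y‖ ^ n : ℝ) = QQ y ^ ((n : ℝ) / 2) := by
  rw [← Real.rpow_natCast ‖y‖ n, norm_rpow_eq]

noncomputable def fundQ (n : ℕ) (y : EuclideanSpace ℝ (Fin n)) : ℝ :=
  if n = 2 then (1 / sphereMeas n) * ((1/2) * Real.log (QQ y))
  else (1 / ((2 - (n : ℝ)) * sphereMeas n)) * QQ y ^ (((2 : ℝ) - n) / 2)

lemma fundSol_eq {y : EuclideanSpace ℝ (Fin n)} (hy : y ≠ 0) :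
    fundSol n y = fundQ n y := by
  unfold fundSol fundQ
  split_ifs with h
  · rw [QQ_eq, Real.log_pow]
    push_cast
    ring
  · rw [norm_rpow_eq]

lemma kelvin_eq {ω : ℝ} {i j : Fin n} {y : EuclideanSpace ℝ (Fin n)} (hy : y ≠ 0) :
    kelvin n ω i j y
      = ((ω + 2) / (2 * (ω + 1))) * (if i = j then 1 else 0) * fundQ n y
        - (ω / (2 * (ω + 1))) * (1 / sphereMeas n) * (y i * y j * QQ y ^ (-(n : ℝ) / 2)) := by
  unfold kelvin
  rw [fundSol_eq hy, norm_pow_eq, div_eq_mul_inv (y i * y j),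
    ← Real.rpow_neg (QQ_pos hy).le, neg_div]

lemma diff_fundQ {y : EuclideanSpace ℝ (Fin n)} (hy : y ≠ 0) :
    DifferentiableAt ℝ (fundQ n) y := by
  unfold fundQ
  split_ifs with h
  · exact ((diff_log_QQ hy).const_mul _).const_mul _
  · exact (diff_QQ_rpow hy _).const_mul _

lemma pd_fundQ (hn : 2 ≤ n) {y : EuclideanSpace ℝ (Fin n)} (hy : y ≠ 0) (l : Fin n) :
    pd (fundQ n) l y = (1 / sphereMeas n) * (y l * QQ y ^ (-(n : ℝ) / 2)) := by
  unfold fundQ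
  split_ifs with h
  · subst h
    rw [show (fun y : EuclideanSpace ℝ (Fin 2) => 1 / sphereMeas 2 * (1 / 2 * Real.log (QQ y)))
        = fun y => (1 / sphereMeas 2 * (1 / 2)) * Real.log (QQ y) by funext y; ring]
    rw [pd_const_mul (diff_log_QQ hy) _ l, pd_log_QQ hy l]
    rw [show (-((2:ℕ) : ℝ) / 2 : ℝ) = (-1 : ℝ) by norm_num, Real.rpow_neg_one]
    ring
  · have h2n : (2 : ℝ) - (n : ℝ) ≠ 0 := by
      have : (2 : ℝ) < n := by
        exact_mod_cast lt_of_le_of_ne hn (Ne.symm h)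
      linarith
    rw [pd_const_mul (diff_QQ_rpow hy _) _ l, pd_QQ_rpow hy _ l]
    rw [show ((2 : ℝ) - n) / 2 - 1 = -(n : ℝ) / 2 by ring]
    rw [one_div, mul_inv, one_div,
      show ((2:ℝ)-(n:ℝ))⁻¹ * (sphereMeas n)⁻¹
            * (((2:ℝ)-n)/2 * QQ y ^ (-(n:ℝ)/2) * (2 * y l))
          = (((2:ℝ)-n)⁻¹*((2:ℝ)-n)) * ((sphereMeas n)⁻¹ * (y l * QQ y ^ (-(n:ℝ)/2))) by ring,
      inv_mul_cancel₀ h2n, one_mul]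

/-! ### Compound derivative helpers -/

lemma diff_A {x : EuclideanSpace ℝ (Fin n)} (hx : x ≠ 0) (a : Fin n) (b : ℝ) :
    DifferentiableAt ℝ (fun y : EuclideanSpace ℝ (Fin n) => y a * QQ y ^ b) x :=
  (diff_coord x a).mul (diff_QQ_rpow hx b)

lemma pd_A {x : EuclideanSpace ℝ (Fin n)} (hx : x ≠ 0) (a : Fin n) (b : ℝ) (l : Fin n) :
    pd (fun y => y a * QQ y ^ b) l x
      = (if a = l then 1 else 0) * QQ x ^ b + x a * (b * QQ x ^ (b - 1) * (2 * x l)) := by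
  rw [pd_mul (diff_coord x a) (diff_QQ_rpow hx b) l, pd_coord, pd_QQ_rpow hx]

lemma diff_E {x : EuclideanSpace ℝ (Fin n)} (hx : x ≠ 0) (a b : Fin n) (c : ℝ) :
    DifferentiableAt ℝ (fun y : EuclideanSpace ℝ (Fin n) => y a * y b * QQ y ^ c) x :=
  ((diff_coord x a).mul (diff_coord x b)).mul (diff_QQ_rpow hx c)

lemma pd_E {x : EuclideanSpace ℝ (Fin n)} (hx : x ≠ 0) (a b : Fin n) (c : ℝ) (l : Fin n) :
    pd (fun y => y a * y b * QQ y ^ c) l x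
      = ((if a = l then 1 else 0) * x b + x a * (if b = l then 1 else 0)) * QQ x ^ c
        + x a * x b * (c * QQ x ^ (c - 1) * (2 * x l)) := by
  rw [pd_mul ((diff_coord x a).fun_mul (diff_coord x b)) (diff_QQ_rpow hx c) l,
    pd_mul (diff_coord x a) (diff_coord x b) l, pd_coord, pd_coord, pd_QQ_rpow hx]

lemma diff_B {x : EuclideanSpace ℝ (Fin n)} (hx : x ≠ 0) (a b c : Fin n) (e : ℝ) :
    DifferentiableAt ℝ (fun y : EuclideanSpace ℝ (Fin n) => y a * (y b * (y c * QQ y ^ e))) x :=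
  (diff_coord x a).mul ((diff_coord x b).mul ((diff_coord x c).mul (diff_QQ_rpow hx e)))

lemma pd_B {x : EuclideanSpace ℝ (Fin n)} (hx : x ≠ 0) (a b c : Fin n) (e : ℝ) (l : Fin n) :
    pd (fun y => y a * (y b * (y c * QQ y ^ e))) l x
      = (if a = l then 1 else 0) * (x b * (x c * QQ x ^ e))
        + x a * ((if b = l then 1 else 0) * (x c * QQ x ^ e)
            + x b * ((if c = l then 1 else 0) * QQ x ^ e
                + x c * (e * QQ x ^ (e - 1) * (2 * x l)))) := by
  rw [pd_mul (diff_coord x a) ((diff_coord x b).fun_mul ((diff_coord x c).fun_mul (diff_QQ_rpow hx e))) l,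
    pd_mul (diff_coord x b) ((diff_coord x c).fun_mul (diff_QQ_rpow hx e)) l,
    pd_mul (diff_coord x c) (diff_QQ_rpow hx e) l,
    pd_coord, pd_coord, pd_coord, pd_QQ_rpow hx]

lemma diff_C {x : EuclideanSpace ℝ (Fin n)} (hx : x ≠ 0) (c1 c2 : ℝ) (a b : Fin n) (e : ℝ) :
    DifferentiableAt ℝ (fun y : EuclideanSpace ℝ (Fin n) => (c1 * y a + c2 * y b) * QQ y ^ e) x :=
  (((diff_coord x a).const_mul c1).add ((diff_coord x b).const_mul c2)).mul (diff_QQ_rpow hx e)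

lemma pd_C {x : EuclideanSpace ℝ (Fin n)} (hx : x ≠ 0) (c1 c2 : ℝ) (a b : Fin n) (e : ℝ) (l : Fin n) :
    pd (fun y => (c1 * y a + c2 * y b) * QQ y ^ e) l x
      = (c1 * (if a = l then 1 else 0) + c2 * (if b = l then 1 else 0)) * QQ x ^ e
        + (c1 * x a + c2 * x b) * (e * QQ x ^ (e - 1) * (2 * x l)) := by
  rw [pd_mul (((diff_coord x a).const_mul c1).fun_add ((diff_coord x b).const_mul c2))
      (diff_QQ_rpow hx e) l,
    pd_add ((diff_coord x a).const_mul c1) ((diff_coord x b).const_mul c2) l,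
    pd_const_mul (diff_coord x a) c1 l, pd_const_mul (diff_coord x b) c2 l,
    pd_coord, pd_coord, pd_QQ_rpow hx]

/-! ### The gradient of `kelvin` -/

noncomputable def Gf (n : ℕ) (ω : ℝ) (i j l : Fin n) (y : EuclideanSpace ℝ (Fin n)) : ℝ :=
  ((ω + 2) / (2 * (ω + 1)) * (if i = j then 1 else 0) * (1 / sphereMeas n))
      * (y l * QQ y ^ (-(n : ℝ) / 2))
    - (ω / (2 * (ω + 1)) * (1 / sphereMeas n)) *
        ( ((if i = l then 1 else 0) * y j + (if j = l then 1 else 0) * y i)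
              * QQ y ^ (-(n : ℝ) / 2)
          + (-(n : ℝ)) * (y i * (y j * (y l * QQ y ^ (-(n : ℝ) / 2 - 1)))) )

lemma pd_kelvin (hn : 2 ≤ n) {ω : ℝ} {i j : Fin n} {y : EuclideanSpace ℝ (Fin n)}
    (hy : y ≠ 0) (l : Fin n) :
    pd (fun w => kelvin n ω i j w) l y = Gf n ω i j l y := by
  have hev : (fun w => kelvin n ω i j w) =ᶠ[nhds y]
      (fun w => (((ω + 2) / (2 * (ω + 1))) * (if i = j then 1 else 0)) * fundQ n w
        - ((ω / (2 * (ω + 1))) * (1 / sphereMeas n)) * (w i * w j * QQ w ^ (-(n : ℝ) / 2))) := by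
    refine (eventually_ne_nhds hy).mono (fun z hz => ?_)
    show kelvin n ω i j z = _
    rw [kelvin_eq hz]
  rw [pd_congr hev l,
    pd_sub ((diff_fundQ hy).const_mul _) ((diff_E hy i j _).const_mul _) l,
    pd_const_mul (diff_fundQ hy) _ l,
    pd_const_mul (diff_E hy i j _) _ l,
    pd_fundQ hn hy l, pd_E hy i j _ l]
  unfold Gf
  ring

/-! ### Summation helpers -/

lemma sum_canon (i j : Fin n) (x : EuclideanSpace ℝ (Fin n)) (K1 K2 K3 K4 K5 : ℝ) :
    ∑ l : Fin n, ((K1 + x l ^ 2 * K2)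
        + ((if i = l then 1 else 0) * ((if j = l then 1 else 0) * K3)
          + ((if i = l then 1 else 0) * (x l * K4) + (if j = l then 1 else 0) * (x l * K5))))
      = n * K1 + QQ x * K2 + (if i = j then 1 else 0) * K3 + x i * K4 + x j * K5 := by
  simp only [Finset.sum_add_distrib, ite_mul, zero_mul, one_mul, Finset.sum_ite_eq,
    Finset.mem_univ, if_true, Finset.sum_const, Finset.card_univ, Fintype.card_fin,
    nsmul_eq_mul, ← Finset.sum_mul]
  rw [show (∑ l : Fin n, x l ^ 2) = QQ x from rfl]
  by_cases h : i = j <;> simp [h, eq_comm] <;> ring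

lemma sum_canon2 (j : Fin n) (x : EuclideanSpace ℝ (Fin n)) (K1 K2 K3 K4 : ℝ) :
    ∑ l : Fin n, ((K1 + x l ^ 2 * K2)
        + ((if l = j then 1 else 0) * (x l * K3) + (if j = l then 1 else 0) * (x l * K4)))
      = n * K1 + QQ x * K2 + x j * K3 + x j * K4 := by
  simp only [Finset.sum_add_distrib, ite_mul, zero_mul, one_mul, Finset.sum_ite_eq,
    Finset.sum_ite_eq', Finset.mem_univ, if_true, Finset.sum_const, Finset.card_univ,
    Fintype.card_fin, nsmul_eq_mul, ← Finset.sum_mul]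
  rw [show (∑ l : Fin n, x l ^ 2) = QQ x from rfl]
  ring

/-! ### Second derivatives of the kelvin matrix -/

lemma pd_Gf {x : EuclideanSpace ℝ (Fin n)} (hx : x ≠ 0) (ω : ℝ) (i j l : Fin n) :
    pd (fun y => Gf n ω i j l y) l x
      = ((((ω + 2) / (2 * (ω + 1)) * (if i = j then 1 else 0) * (1 / sphereMeas n))
              * QQ x ^ (-(n : ℝ) / 2)
            + (n : ℝ) * (ω / (2 * (ω + 1)) * (1 / sphereMeas n))
              * (x i * x j * QQ x ^ (-(n : ℝ) / 2 - 1))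
          + x l ^ 2 *
            (((ω + 2) / (2 * (ω + 1)) * (if i = j then 1 else 0) * (1 / sphereMeas n))
                * (-(n : ℝ)) * QQ x ^ (-(n : ℝ) / 2 - 1)
              + (ω / (2 * (ω + 1)) * (1 / sphereMeas n)) * ((n : ℝ) * (-(n : ℝ) - 2))
                * (x i * x j * QQ x ^ (-(n : ℝ) / 2 - 1 - 1))))
        + ((if i = l then 1 else 0) * ((if j = l then 1 else 0)
              * (-2 * (ω / (2 * (ω + 1)) * (1 / sphereMeas n)) * QQ x ^ (-(n : ℝ) / 2)))
          + ((if i = l then 1 else 0) * (x l * ((ω / (2 * (ω + 1)) * (1 / sphereMeas n))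
                * (2 * (n : ℝ)) * (x j * QQ x ^ (-(n : ℝ) / 2 - 1))))
            + (if j = l then 1 else 0) * (x l * ((ω / (2 * (ω + 1)) * (1 / sphereMeas n))
                * (2 * (n : ℝ)) * (x i * QQ x ^ (-(n : ℝ) / 2 - 1))))))) := by
  unfold Gf
  rw [pd_sub ((diff_A hx l _).const_mul _)
      (((diff_C hx _ _ j i _).fun_add ((diff_B hx i j l _).const_mul _)).const_mul _) l,
    pd_const_mul (diff_A hx l _) _ l,
    pd_const_mul ((diff_C hx _ _ j i _).fun_add ((diff_B hx i j l _).const_mul _)) _ l,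
    pd_add (diff_C hx _ _ j i _) ((diff_B hx i j l _).const_mul _) l,
    pd_const_mul (diff_B hx i j l _) _ l,
    pd_A hx l _ l, pd_C hx _ _ j i _ l, pd_B hx i j l _ l]
  rw [if_pos (rfl : l = l)]
  ring

lemma sphereMeas_pos (hn : 2 ≤ n) : 0 < sphereMeas n := by
  have h1 : 0 < volume (Metric.ball (0 : EuclideanSpace ℝ (Fin n)) 1) :=
    Metric.measure_ball_pos _ _ one_pos
  have h2 : volume (Metric.ball (0 : EuclideanSpace ℝ (Fin n)) 1) < ⊤ :=
    measure_ball_lt_top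
  have hn0 : (0 : ℝ) < n := by
    have : 0 < n := by omega
    exact_mod_cast this
  unfold sphereMeas
  exact mul_pos hn0 (ENNReal.toReal_pos h1.ne' h2.ne)

end LameAux

open LameAux in
set_option maxHeartbeats 1000000 in
theorem Lame_kelvin_column_eq_zero (n : ℕ) (hn : 2 ≤ n) (ω : ℝ) (hω : ω ≠ -1)
    (x : EuclideanSpace ℝ (Fin n)) (hx : x ≠ 0) (j i : Fin n) :
    (∑ l : Fin n, pd (pd (fun y => kelvin n ω i j y) l) l x)
        + ω * pd (fun y => ∑ l : Fin n, pd (fun w => kelvin n ω l j w) l y) i x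
      = 0 := by
  have hω1 : ω + 1 ≠ 0 := fun h => hω (by linarith)
  have hs : (0 : ℝ) < sphereMeas n := sphereMeas_pos hn
  -- the Laplacian term
  have hlapterm : ∀ l : Fin n,
      pd (pd (fun y => kelvin n ω i j y) l) l x
        = ((((ω + 2) / (2 * (ω + 1)) * (if i = j then 1 else 0) * (1 / sphereMeas n))
              * QQ x ^ (-(n : ℝ) / 2)
            + (n : ℝ) * (ω / (2 * (ω + 1)) * (1 / sphereMeas n))
              * (x i * x j * QQ x ^ (-(n : ℝ) / 2 - 1))
          + x l ^ 2 *
            (((ω + 2) / (2 * (ω + 1)) * (if i = j then 1 else 0) * (1 / sphereMeas n))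
                * (-(n : ℝ)) * QQ x ^ (-(n : ℝ) / 2 - 1)
              + (ω / (2 * (ω + 1)) * (1 / sphereMeas n)) * ((n : ℝ) * (-(n : ℝ) - 2))
                * (x i * x j * QQ x ^ (-(n : ℝ) / 2 - 1 - 1))))
        + ((if i = l then 1 else 0) * ((if j = l then 1 else 0)
              * (-2 * (ω / (2 * (ω + 1)) * (1 / sphereMeas n)) * QQ x ^ (-(n : ℝ) / 2)))
          + ((if i = l then 1 else 0) * (x l * ((ω / (2 * (ω + 1)) * (1 / sphereMeas n))
                * (2 * (n : ℝ)) * (x j * QQ x ^ (-(n : ℝ) / 2 - 1))))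
            + (if j = l then 1 else 0) * (x l * ((ω / (2 * (ω + 1)) * (1 / sphereMeas n))
                * (2 * (n : ℝ)) * (x i * QQ x ^ (-(n : ℝ) / 2 - 1))))))) := by
    intro l
    have hev : (pd (fun y => kelvin n ω i j y) l) =ᶠ[nhds x] (fun y => Gf n ω i j l y) :=
      (eventually_ne_nhds hx).mono (fun z hz => pd_kelvin hn hz l)
    rw [pd_congr hev l, pd_Gf hx ω i j l]
  -- the divergence
  have hdiv : ∀ y : EuclideanSpace ℝ (Fin n), y ≠ 0 →
      (∑ l : Fin n, pd (fun w => kelvin n ω l j w) l y)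
        = ((1 / (ω + 1)) * (1 / sphereMeas n)) * (y j * QQ y ^ (-(n : ℝ) / 2)) := by
    intro y hy
    have h1 : ∀ l : Fin n, pd (fun w => kelvin n ω l j w) l y
        = (((-(ω / (2 * (ω + 1)) * (1 / sphereMeas n))) * (y j * QQ y ^ (-(n : ℝ) / 2))
              + y l ^ 2 * ((ω / (2 * (ω + 1)) * (1 / sphereMeas n)) * (n : ℝ)
                  * (y j * QQ y ^ (-(n : ℝ) / 2 - 1))))
          + ((if l = j then 1 else 0)
                * (y l * ((ω + 2) / (2 * (ω + 1)) * (1 / sphereMeas n) * QQ y ^ (-(n : ℝ) / 2)))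
            + (if j = l then 1 else 0)
                * (y l * ((-(ω / (2 * (ω + 1)) * (1 / sphereMeas n))) * QQ y ^ (-(n : ℝ) / 2))))) := by
      intro l
      rw [pd_kelvin hn hy l]
      unfold Gf
      rw [if_pos (rfl : l = l)]
      ring
    rw [Finset.sum_congr rfl (fun l _ => h1 l), sum_canon2]
    have hyq : QQ y ^ (-(n : ℝ) / 2 - 1) * QQ y = QQ y ^ (-(n : ℝ) / 2) := by
      rw [← Real.rpow_add_one (QQ_pos hy).ne' (-(n : ℝ) / 2 - 1)]
      congr 1
      ring
    rw [← hyq]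
    field_simp
    ring
  -- the gradient of the divergence
  have hgrad : pd (fun y => ∑ l : Fin n, pd (fun w => kelvin n ω l j w) l y) i x
      = ((1 / (ω + 1)) * (1 / sphereMeas n))
          * ((if j = i then 1 else 0) * QQ x ^ (-(n : ℝ) / 2)
            + x j * (-(n : ℝ) / 2 * QQ x ^ (-(n : ℝ) / 2 - 1) * (2 * x i))) := by
    have hev : (fun y => ∑ l : Fin n, pd (fun w => kelvin n ω l j w) l y)
        =ᶠ[nhds x] (fun y => ((1 / (ω + 1)) * (1 / sphereMeas n)) * (y j * QQ y ^ (-(n : ℝ) / 2))) :=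
      (eventually_ne_nhds hx).mono (fun z hz => hdiv z hz)
    rw [pd_congr hev i, pd_const_mul (diff_A hx j _) _ i, pd_A hx j _ i]
  -- assemble
  rw [Finset.sum_congr rfl (fun l _ => hlapterm l), sum_canon, hgrad]
  have hji : (if j = i then (1:ℝ) else 0) = (if i = j then 1 else 0) := by
    simp [eq_comm]
  rw [hji]
  have h1 : QQ x ^ (-(n : ℝ) / 2 - 1) * QQ x = QQ x ^ (-(n : ℝ) / 2) := by
    rw [← Real.rpow_add_one (QQ_pos hx).ne' (-(n : ℝ) / 2 - 1)]
    congr 1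
    ring
  have h2 : QQ x ^ (-(n : ℝ) / 2 - 1 - 1) * QQ x = QQ x ^ (-(n : ℝ) / 2 - 1) := by
    rw [← Real.rpow_add_one (QQ_pos hx).ne' (-(n : ℝ) / 2 - 1 - 1)]
    congr 1
    ring
  rw [← h1, ← h2]
  set d : ℝ := (if i = j then (1:ℝ) else 0) with hd
  field_simp
  ring
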